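/- arXiv:1207.2443 — 2 statements merged into one kernel-verified Lean document; each statement's English description precedes it below -/
import Mathlib

section
/- A positive semi-definite symmetric bilinear form Q on ℝ^g lies in Ω via the GL_g(ℤ) action in block form: Q is in the rational closure Ω_g^{rt} if and only if there exists h ∈ GL_g(ℤ) such that h Q hᵗ = diag(Q', 0) for some positive definite quadratic form Q' on ℝ^{g'} with 0 ≤ g' ≤ g. Equivalently, the null space of Q admits a basis of rational vectors. -/
open Matrix

/-- The null space of the real matrix `Q` admits a basis of rational vectors, i.e. it is
spanned by its rational elements. -/
def RationallyDefinedNull {g : ℕ} (Q : Matrix (Fin g) (Fin g) ℝ) : Prop :=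
  Submodule.span ℝ {w : Fin g → ℝ | (∀ i, ∃ q : ℚ, w i = (q : ℝ)) ∧ Q.mulVec w = 0}
    = LinearMap.ker Q.mulVecLin

/-- A positive semi-definite symmetric bilinear form `Q` on `ℝ^g` lies in the rational
closure `Ω_g^{rt}` (its null space admits a basis of rational vectors) if and only if
there exists `h ∈ GL_g(ℤ)` such that `h Q hᵗ = diag(Q', 0)` for some positive definite
quadratic form `Q'` on `ℝ^{g'}` with `0 ≤ g' ≤ g`. -/
theorem stmt3 {g : ℕ} (Q : Matrix (Fin g) (Fin g) ℝ) (hsym : Q.IsSymm)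
    (hQ : Q.PosSemidef) :
    RationallyDefinedNull Q ↔
      ∃ h : Matrix (Fin g) (Fin g) ℤ, IsUnit h.det ∧
        ∃ (g' : ℕ) (hle : g' ≤ g) (Q' : Matrix (Fin g') (Fin g') ℝ), Q'.PosDef ∧
          (h.map (Int.cast : ℤ → ℝ)) * Q * (h.map (Int.cast : ℤ → ℝ))ᵀ
            = (Matrix.fromBlocks Q' 0 0 (0 : Matrix (Fin (g - g')) (Fin (g - g')) ℝ)).submatrix
                (finSumFinEquiv.trans (finCongr (Nat.add_sub_cancel' hle))).symm
                (finSumFinEquiv.trans (finCongr (Nat.add_sub_cancel' hle))).symm := by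

  constructor
  · intro hrat
    classical
    -- the coordinatewise cast from integer vectors to real vectors
    set c : (Fin g → ℤ) → (Fin g → ℝ) := fun v i => ((v i : ℤ) : ℝ) with hcdef
    have hc_add : ∀ v w, c (v + w) = c v + c w := by
      intro v w; funext i; simp [hcdef]
    have hc_smul : ∀ (m : ℤ) v, c (m • v) = (m : ℝ) • c v := by
      intro m v; funext i; simp [hcdef]
    -- the integer null lattice
    set N : Submodule ℤ (Fin g → ℤ) :=
      { carrier := {v | Q.mulVec (c v) = 0}
        add_mem' := fun {v w} hv hw => by
          simp only [Set.mem_setOf_eq] at hv hw ⊢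
          rw [hc_add, mulVec_add, hv, hw, add_zero]
        zero_mem' := by
          simp only [Set.mem_setOf_eq]
          have : c 0 = 0 := by funext i; simp [hcdef]
          rw [this, mulVec_zero]
        smul_mem' := fun m v hv => by
          simp only [Set.mem_setOf_eq] at hv ⊢
          rw [hc_smul, mulVec_smul, hv, smul_zero] } with hNdef
    obtain ⟨n, bM, bN, f, a, hsnf⟩ := Submodule.smithNormalForm (Pi.basisFun ℤ (Fin g)) N
    have ha : ∀ i, a i ≠ 0 := by
      intro i hai
      have h1 := hsnf i
      rw [hai, zero_smul] at h1
      exact bN.ne_zero i (Submodule.coe_eq_zero.mp h1)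
    have hfnull : ∀ i : Fin n, Q.mulVec (c (bM (f i))) = 0 := by
      intro i
      have h1 : Q.mulVec (c ((bN i : Fin g → ℤ))) = 0 := (bN i).2
      rw [hsnf i] at h1
      rw [show ((a i • bM (f i) : Fin g → ℤ)) = a i • (bM (f i)) from rfl] at h1
      rw [hc_smul, mulVec_smul] at h1
      have hane : ((a i : ℝ)) ≠ 0 := Int.cast_ne_zero.2 (ha i)
      exact (smul_eq_zero.mp h1).resolve_left hane
    have hn : n ≤ g := by simpa using Fintype.card_le_of_embedding f
    have hle : g - n ≤ g := Nat.sub_le g n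
    have hk : g - (g - n) = n := Nat.sub_sub_self hn
    set ψ : Fin (g - n) ⊕ Fin (g - (g - n)) ≃ Fin g :=
      finSumFinEquiv.trans (finCongr (Nat.add_sub_cancel' hle)) with hψdef
    set f' : Fin (g - (g - n)) ↪ Fin g := (finCongr hk).toEmbedding.trans f with hf'def
    -- an equivalence putting the range of f' in the second block
    set S : Set (Fin g) := Set.range f' with hSdef
    have hcardS : Fintype.card S = g - (g - n) := by
      rw [Set.card_range_of_injective f'.injective, Fintype.card_fin]
    have hcardC : Fintype.card (↥Sᶜ) = g - n := by
      rw [Fintype.card_compl_set, hcardS, Fintype.card_fin]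
      omega
    set eS : Fin (g - (g - n)) ≃ S := Equiv.ofInjective f' f'.injective with heSdef
    set eC : Fin (g - n) ≃ ↥Sᶜ := (Fintype.equivFinOfCardEq hcardC).symm with heCdef
    set u : Fin (g - n) ⊕ Fin (g - (g - n)) ≃ Fin g :=
      ((Equiv.sumComm _ _).trans ((Equiv.sumCongr eS eC).trans
        (Equiv.Set.sumCompl S))) with hudef
    have hu_inr : ∀ j, u (Sum.inr j) = f' j := by
      intro j
      simp only [hudef, heSdef, Equiv.trans_apply, Equiv.sumComm_apply, Sum.swap_inr,
        Equiv.sumCongr_apply, Sum.map_inl, Equiv.Set.sumCompl_apply_inl,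
        Equiv.ofInjective_apply]
      rfl
    set τ : Fin g ≃ Fin g := ψ.symm.trans u with hτdef
    set hM : Matrix (Fin g) (Fin g) ℤ := Matrix.of (fun i j => bM (τ i) j) with hMdef
    have hMdet : IsUnit hM.det := by
      have h1 : hM = ((Pi.basisFun ℤ (Fin g)).toMatrix ⇑(bM.reindex τ.symm))ᵀ := by
        ext i j
        simp [hMdef, Module.Basis.toMatrix_apply, Pi.basisFun_repr]
      have : Invertible ((Pi.basisFun ℤ (Fin g)).toMatrix ⇑(bM.reindex τ.symm)) :=
        (Pi.basisFun ℤ (Fin g)).invertibleToMatrix (bM.reindex τ.symm)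
      rw [h1, det_transpose]
      exact isUnit_det_of_invertible _
    set A : Matrix (Fin g) (Fin g) ℝ := hM.map (Int.cast : ℤ → ℝ) with hAdef
    have hArow : ∀ i, A i = c (bM (τ i)) := by
      intro i; funext k; simp [hAdef, hMdef, hcdef]
    have hAdet : IsUnit A.det := by
      rw [hAdef, show (Int.cast : ℤ → ℝ) = ⇑(Int.castRingHom ℝ) from rfl,
        ← RingHom.mapMatrix_apply, ← RingHom.map_det]
      exact hMdet.map _
    -- rows in the second block are null vectors of Q
    have hrow0 : ∀ j, Q.mulVec (A (ψ (Sum.inr j))) = 0 := by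
      intro j
      rw [hArow]
      have : τ (ψ (Sum.inr j)) = f' j := by
        rw [hτdef]; simp [hu_inr j]
      rw [this, hf'def]
      exact hfnull _
    -- entries of the congruent matrix
    have hentry : ∀ i j, (A * Q * Aᵀ) i j = A i ⬝ᵥ Q.mulVec (A j) := by
      intro i j
      simp only [mul_apply, mulVec, dotProduct, transpose_apply, Finset.sum_mul,
        Finset.mul_sum]
      rw [Finset.sum_comm]
      apply Finset.sum_congr rfl
      intro k _
      apply Finset.sum_congr rfl
      intro l _
      ring
    have hvecMul : ∀ v, Q.vecMul v = Q.mulVec v := by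
      intro v
      conv_lhs => rw [← hsym]
      rw [vecMul_transpose]
    have hrow0' : ∀ (j) (i : Fin g), (A * Q * Aᵀ) (ψ (Sum.inr j)) i = 0 := by
      intro j i
      rw [hentry, dotProduct_mulVec, hvecMul, hrow0, zero_dotProduct]
    have hrow0'' : ∀ (j) (i : Fin g), (A * Q * Aᵀ) i (ψ (Sum.inr j)) = 0 := by
      intro j i
      rw [hentry, hrow0, dotProduct_zero]
    -- the positive block
    set r : Fin (g - n) → Fin g := fun i => ψ (Sum.inl i) with hrdef
    set B : Matrix (Fin (g - n)) (Fin g) ℝ := A.submatrix r id with hBdef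
    set Q' : Matrix (Fin (g - n)) (Fin (g - n)) ℝ := B * Q * Bᵀ with hQ'def
    have hQ'entry : ∀ i j, Q' i j = (A * Q * Aᵀ) (r i) (r j) := by
      intro i j
      simp only [hQ'def, hBdef, mul_apply, submatrix_apply, transpose_apply, id]
    -- symmetry of the congruent matrix
    have hMsymm : (A * Q * Aᵀ)ᵀ = A * Q * Aᵀ := by
      rw [transpose_mul, transpose_mul, transpose_transpose, hsym.eq, Matrix.mul_assoc]
    -- the null space of Q is spanned by the `inr` rows
    have hker_le : LinearMap.ker Q.mulVecLin ≤
        Submodule.span ℝ (Set.range fun j : Fin n => c (bM (f j))) := by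
      rw [← hrat]
      apply Submodule.span_le.2
      rintro w ⟨hwq, hw0⟩
      choose q hq using hwq
      set d : ℕ := ∏ i, (q i).den with hddef
      have hdpos : 0 < d := Finset.prod_pos (fun i _ => (q i).pos)
      have hdvd : ∀ i, (q i).den ∣ d := fun i =>
        Finset.dvd_prod_of_mem _ (Finset.mem_univ i)
      set z : Fin g → ℤ := fun i => ((d / (q i).den : ℕ) : ℤ) * (q i).num with hzdef
      have hzq : ∀ i, ((z i : ℚ)) = (d : ℚ) * q i := by
        intro i
        have hden : ((q i).den : ℚ) ≠ 0 := Nat.cast_ne_zero.mpr (q i).den_ne_zero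
        have h2 : ((q i).num : ℚ) = ((q i).den : ℚ) * q i := by
          rw [mul_comm]
          exact (div_eq_iff hden).mp (Rat.num_div_den (q i))
        have h4 : ((d / (q i).den : ℕ) : ℚ) * ((q i).den : ℚ) = (d : ℚ) := by
          rw [← Nat.cast_mul, Nat.div_mul_cancel (hdvd i)]
        calc ((z i : ℚ)) = ((d / (q i).den : ℕ) : ℚ) * ((q i).num : ℚ) := by
              rw [hzdef]
              simp only [Int.cast_mul, Int.cast_natCast]
          _ = (d : ℚ) * q i := by rw [h2, ← mul_assoc, h4]
      have hcz : c z = (d : ℝ) • w := by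
        funext i
        have : ((z i : ℝ)) = (((z i : ℚ) : ℝ)) := by push_cast; ring
        rw [hcdef]
        simp only [Pi.smul_apply, smul_eq_mul]
        rw [this, hzq i]
        push_cast
        rw [hq i]
      have hzN : z ∈ N := by
        show Q.mulVec (c z) = 0
        rw [hcz, mulVec_smul, hw0, smul_zero]
      set rc := bN.repr ⟨z, hzN⟩ with hrcdef
      have hrepr := bN.sum_repr ⟨z, hzN⟩
      have hcoe : z = ∑ j, (rc j * a j) • bM (f j) := by
        have h3 : ((∑ j, rc j • bN j : N) : Fin g → ℤ) = z := congrArg Subtype.val hrepr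
        rw [← h3, AddSubmonoidClass.coe_finset_sum]
        apply Finset.sum_congr rfl
        intro j _
        rw [Submodule.coe_smul, hsnf j, smul_smul]
      have hczsum : c z = ∑ j, ((rc j * a j : ℤ) : ℝ) • c (bM (f j)) := by
        funext i
        have h5 : z i = ∑ j, (rc j * a j) * bM (f j) i := by
          rw [hcoe]
          simp [Finset.sum_apply, Pi.smul_apply, smul_eq_mul]
        show ((z i : ℤ) : ℝ) = (∑ j, ((rc j * a j : ℤ) : ℝ) • c (bM (f j))) i
        rw [h5]
        push_cast
        simp [Finset.sum_apply, Pi.smul_apply, hcdef]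
      have hw : w = (d : ℝ)⁻¹ • c z := by
        rw [hcz, smul_smul, inv_mul_cancel₀ (by exact_mod_cast hdpos.ne'), one_smul]
      rw [hw]
      apply Submodule.smul_mem
      rw [hczsum]
      apply Submodule.sum_mem
      intro j _
      exact Submodule.smul_mem _ _ (Submodule.subset_span ⟨j, rfl⟩)
    -- positive definiteness of the upper block
    have hQ'pos : Q'.PosDef := by
      refine Matrix.PosDef.of_dotProduct_mulVec_pos ?_ ?_
      · show Q'ᴴ = Q'
        ext i j
        simp only [conjTranspose_apply, star_trivial]
        rw [hQ'entry, hQ'entry]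
        conv_lhs => rw [← hMsymm]
        rw [transpose_apply]
      · intro x hx
        have hquad : star x ⬝ᵥ Q'.mulVec x = (Bᵀ.mulVec x) ⬝ᵥ Q.mulVec (Bᵀ.mulVec x) := by
          rw [star_trivial, hQ'def, Matrix.mul_assoc, ← mulVec_mulVec, ← mulVec_mulVec,
            dotProduct_mulVec, ← mulVec_transpose]
        set y : Fin g → ℝ := Bᵀ.mulVec x with hydef
        have hnonneg : 0 ≤ y ⬝ᵥ Q.mulVec y := by
          have := hQ.dotProduct_mulVec_nonneg y
          rwa [star_trivial] at this
        have hne : y ⬝ᵥ Q.mulVec y ≠ 0 := by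
          intro h0
          have hQy : Q.mulVec y = 0 := by
            have := (hQ.dotProduct_mulVec_zero_iff y).mp (by rwa [star_trivial])
            exact this
          -- y lies in the span of the inr rows of A
          have hySpan : y ∈ Submodule.span ℝ
              (Set.range fun j : Fin (g - (g - n)) => A (ψ (Sum.inr j))) := by
            have h1 : y ∈ LinearMap.ker Q.mulVecLin := by
              rw [LinearMap.mem_ker, mulVecLin_apply, hQy]
            have h2 := hker_le h1
            refine Submodule.span_mono ?_ h2
            rintro - ⟨j, rfl⟩
            refine ⟨(finCongr hk).symm j, ?_⟩
            show A (ψ (Sum.inr ((finCongr hk).symm j))) = c (bM (f j))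
            rw [hArow]
            have : τ (ψ (Sum.inr ((finCongr hk).symm j))) = f' ((finCongr hk).symm j) := by
              rw [hτdef]; simp [hu_inr]
            rw [this, hf'def]
            simp
          obtain ⟨cf, hcf⟩ := (Submodule.mem_span_range_iff_exists_fun ℝ).mp hySpan
          -- y is also the combination of the inl rows with coefficients x
          have hyx : y = ∑ i, x i • A (ψ (Sum.inl i)) := by
            funext k
            rw [hydef]
            simp only [mulVec, dotProduct, transpose_apply, Finset.sum_apply,
              Pi.smul_apply, smul_eq_mul, hBdef, submatrix_apply, hrdef, id]
            apply Finset.sum_congr rfl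
            intro i _
            ring
          -- rows of A are linearly independent
          have hLI : LinearIndependent ℝ (fun i => A i) :=
            linearIndependent_rows_iff_isUnit.2 ((Matrix.isUnit_iff_isUnit_det A).2 hAdet)
          set zf : Fin g → ℝ := Sum.elim x (fun j => -cf j) ∘ ψ.symm with hzfdef
          have hsum0 : ∑ k, zf k • A k = 0 := by
            rw [← Equiv.sum_comp ψ (fun k => zf k • A k), Fintype.sum_sum_type]
            have hzl : ∀ i, zf (ψ (Sum.inl i)) = x i := by
              intro i; rw [hzfdef]; simp
            have hzr : ∀ j, zf (ψ (Sum.inr j)) = -cf j := by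
              intro j; rw [hzfdef]; simp
            simp only [hzl, hzr, neg_smul, Finset.sum_neg_distrib]
            rw [← hyx, hcf]
            exact add_neg_cancel y
          have hz0 := Fintype.linearIndependent_iff.mp hLI zf hsum0
          apply hx
          funext i
          have := hz0 (ψ (Sum.inl i))
          rw [hzfdef] at this
          simpa using this
        rw [hquad]
        exact lt_of_le_of_ne hnonneg (Ne.symm hne)
    -- assemble
    refine ⟨hM, hMdet, g - n, hle, Q', hQ'pos, ?_⟩
    have key : (A * Q * Aᵀ).submatrix ⇑ψ ⇑ψ = fromBlocks Q' 0 0 0 := by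
      ext p q
      cases p with
      | inl i =>
        cases q with
        | inl j =>
          rw [submatrix_apply, fromBlocks_apply₁₁, hQ'entry]
        | inr j =>
          rw [submatrix_apply, fromBlocks_apply₁₂, hrow0'']
          rfl
      | inr i =>
        cases q with
        | inl j =>
          rw [submatrix_apply, fromBlocks_apply₂₁, hrow0']
          rfl
        | inr j =>
          rw [submatrix_apply, fromBlocks_apply₂₂, hrow0']
          rfl
    rw [← hAdef, ← key, submatrix_submatrix]
    ext i j
    simp [hψdef]
  · rintro ⟨h, hdet, g', hle, Q', hQ', heq⟩
    set ψ : Fin g' ⊕ Fin (g - g') ≃ Fin g :=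
      finSumFinEquiv.trans (finCongr (Nat.add_sub_cancel' hle)) with hψ
    set A : Matrix (Fin g) (Fin g) ℝ := h.map (Int.cast : ℤ → ℝ) with hAdef
    set D : Matrix (Fin g' ⊕ Fin (g - g')) (Fin g' ⊕ Fin (g - g')) ℝ :=
      fromBlocks Q' 0 0 0 with hDdef
    have hAdet : IsUnit A.det := by
      rw [hAdef, show (Int.cast : ℤ → ℝ) = ⇑(Int.castRingHom ℝ) from rfl,
        ← RingHom.mapMatrix_apply, ← RingHom.map_det]
      exact hdet.map _
    have hAinj : Function.Injective A.mulVec :=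
      mulVec_injective_iff_isUnit.2 ((Matrix.isUnit_iff_isUnit_det A).2 hAdet)
    -- each row of A (for index in the `inr` range) is a rational null vector of Q
    have hrow : ∀ j : Fin (g - g'), Q.mulVec (A (ψ (Sum.inr j))) = 0 := by
      intro j
      apply hAinj
      rw [mulVec_zero]
      have hcol : ∀ k, (Q * Aᵀ) k (ψ (Sum.inr j)) = Q.mulVec (A (ψ (Sum.inr j))) k := by
        intro k
        simp [mul_apply, mulVec, dotProduct, transpose_apply]
      have : A.mulVec (fun k => (Q * Aᵀ) k (ψ (Sum.inr j))) = 0 := by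
        funext i
        have := congrFun (congrFun heq i) (ψ (Sum.inr j))
        rw [Matrix.mul_assoc] at this
        calc A.mulVec (fun k => (Q * Aᵀ) k (ψ (Sum.inr j))) i
            = (A * (Q * Aᵀ)) i (ψ (Sum.inr j)) := by
              simp [mul_apply, mulVec, dotProduct]
          _ = (D.submatrix ψ.symm ψ.symm) i (ψ (Sum.inr j)) := this
          _ = 0 := by
              simp only [submatrix_apply, Equiv.symm_apply_apply]
              rcases hs : ψ.symm i with p | p <;>
                simp [hDdef, fromBlocks_apply₁₂, fromBlocks_apply₂₂]
      have hfun : Q.mulVec (A (ψ (Sum.inr j))) = fun k => (Q * Aᵀ) k (ψ (Sum.inr j)) :=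
        funext fun k => (hcol k).symm
      rw [hfun]
      exact this
    unfold RationallyDefinedNull
    apply le_antisymm
    · rw [Submodule.span_le]
      rintro w ⟨-, hw⟩
      simpa [LinearMap.mem_ker, mulVecLin_apply] using hw
    · intro v hv
      rw [LinearMap.mem_ker, mulVecLin_apply] at hv
      have : Invertible A := A.invertibleOfIsUnitDet hAdet
      have hATdet : IsUnit Aᵀ.det := by rwa [det_transpose]
      set w : Fin g → ℝ := (Aᵀ)⁻¹.mulVec v with hwdef
      have hvw : Aᵀ.mulVec w = v := by
        rw [hwdef, mulVec_mulVec, mul_nonsing_inv _ hATdet, one_mulVec]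
      -- D.mulVec (w ∘ ψ) = 0
      have hDw : D.mulVec (w ∘ ψ) = 0 := by
        have h1 : (D.submatrix ψ.symm ψ.symm).mulVec w = 0 := by
          rw [← heq, Matrix.mul_assoc, ← mulVec_mulVec, ← mulVec_mulVec, hvw, hv,
            mulVec_zero]
        have h2 : (D.submatrix ψ.symm ψ.symm).mulVec w
            = (D.mulVec (w ∘ ψ)) ∘ ψ.symm := by
          rw [submatrix_mulVec_equiv]
          simp
        funext p
        have := congrFun (h2 ▸ h1) (ψ p)
        simpa using this
      -- first-block coordinates of w vanish
      have hwin : ∀ i : Fin g', w (ψ (Sum.inl i)) = 0 := by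
        have hq : Q'.mulVec (w ∘ ψ ∘ Sum.inl) = 0 := by
          have := congrFun hDw
          funext i
          have h3 := this (Sum.inl i)
          simp only [hDdef, fromBlocks_mulVec, Sum.elim_inl, Pi.zero_apply,
            zero_mulVec, add_zero, Pi.add_apply] at h3
          simpa [Function.comp_assoc] using h3
        have hinj : Function.Injective Q'.mulVec :=
          mulVec_injective_iff_isUnit.2 ((Matrix.isUnit_iff_isUnit_det Q').2
            (isUnit_iff_ne_zero.2 hQ'.det_pos.ne'))
        have h0 : (w ∘ ⇑ψ ∘ Sum.inl) = 0 := hinj (by rw [hq, mulVec_zero])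
        exact fun i => congrFun h0 i
      -- v is a combination of the inr rows of A
      have hv_sum : v = ∑ j : Fin (g - g'), w (ψ (Sum.inr j)) • A (ψ (Sum.inr j)) := by
        funext i
        have : v i = ∑ k, w k * A k i := by
          rw [← hvw]; simp [mulVec, dotProduct, transpose_apply, mul_comm]
        rw [this, ← Equiv.sum_comp ψ (fun k => w k * A k i), Fintype.sum_sum_type]
        simp only [hwin, zero_mul, Finset.sum_const_zero, zero_add]
        simp [Finset.sum_apply]
      rw [hv_sum]
      apply Submodule.sum_mem
      intro j _
      apply Submodule.smul_mem
      apply Submodule.subset_span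
      refine ⟨fun i => ⟨(h (ψ (Sum.inr j)) i : ℚ), ?_⟩, hrow j⟩
      simp [hAdef]
end

section
/- If Σ is an admissible decomposition of Ω_g^{rt} (a fan of rational polyhedral cones with support Ω_g^{rt} permuted by GL_g(ℤ)), then Ω_g^{rt} \ Ω_g is a union of cones of Σ; that is, every cone of Σ whose relative interior meets the boundary Ω_g^{rt} \ Ω_g is entirely contained in that boundary. -/
open Matrix

lemma quad_sum {g k : ℕ} (A : Fin k → Matrix (Fin g) (Fin g) ℝ) (c : Fin k → ℝ)
    (x : Fin g → ℝ) :
    dotProduct (star x) ((∑ i, c i • A i) *ᵥ x)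
      = ∑ i, c i * dotProduct (star x) (A i *ᵥ x) := by
  have h1 : (∑ i, c i • A i) *ᵥ x = ∑ i, c i • (A i *ᵥ x) := by
    induction (Finset.univ : Finset (Fin k)) using Finset.induction_on with
    | empty => simp [Matrix.mulVec]
    | insert a s h ih =>
        rw [Finset.sum_insert h, Finset.sum_insert h, Matrix.add_mulVec, ih,
          Matrix.smul_mulVec]
  rw [h1]
  simp only [dotProduct, Finset.sum_apply, Pi.smul_apply, smul_eq_mul, Finset.mul_sum]
  rw [Finset.sum_comm]
  exact Finset.sum_congr rfl fun i _ => Finset.sum_congr rfl fun j _ => by ring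

/-- Let `σ` be a rational polyhedral cone of `Ω_g^{rt}`, generated by finitely many
positive semi-definite matrices `A₁,…,A_k` with rational entries (as in an admissible
decomposition `Σ` of `Ω_g^{rt}`).  If some point of the relative interior of `σ`
(i.e. some strictly positive combination of the generators) lies in the boundary
`Ω_g^{rt} \ Ω_g` (i.e. is not positive definite), then the whole cone `σ` is contained
in the boundary: every element of `σ` is positive semi-definite but not positive
definite. -/
theorem stmt7 {g k : ℕ} (A : Fin k → Matrix (Fin g) (Fin g) ℝ)
    (hA : ∀ i, (A i).PosSemidef)
    (hrat : ∀ i p q, ∃ r : ℚ, A i p q = (r : ℝ))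
    (lam : Fin k → ℝ) (hlam : ∀ i, 0 < lam i)
    (hbd : ¬ (∑ i, lam i • A i).PosDef) :
    ∀ B ∈ {B : Matrix (Fin g) (Fin g) ℝ |
        ∃ c : Fin k → ℝ, (∀ i, 0 ≤ c i) ∧ B = ∑ i, c i • A i},
      B.PosSemidef ∧ ¬ B.PosDef := by
  -- the sum ∑ lam i • A i is PSD
  have hPSD : ∀ (c : Fin k → ℝ), (∀ i, 0 ≤ c i) → (∑ i, c i • A i).PosSemidef := by
    intro c hc
    refine Matrix.posSemidef_iff_dotProduct_mulVec.mpr ⟨?_, ?_⟩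
    · show (∑ i, c i • A i)ᴴ = ∑ i, c i • A i
      rw [Matrix.conjTranspose_sum]
      refine Finset.sum_congr rfl fun i _ => ?_
      rw [Matrix.conjTranspose_smul, star_trivial, (hA i).1]
    · intro x
      rw [quad_sum]
      exact Finset.sum_nonneg fun i _ => mul_nonneg (hc i) ((Matrix.posSemidef_iff_dotProduct_mulVec.mp (hA i)).2 x)
  -- get a nonzero vector killed by every A i
  have hlamPSD := hPSD lam fun i => (hlam i).le
  obtain ⟨x, hx0, hxq⟩ : ∃ x : Fin g → ℝ, x ≠ 0 ∧
      ∀ i, dotProduct (star x) (A i *ᵥ x) = 0 := by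
    by_contra hcon
    push_neg at hcon
    apply hbd
    refine Matrix.posDef_iff_dotProduct_mulVec.mpr ⟨hlamPSD.1, fun x hx => ?_⟩
    rw [quad_sum]
    obtain ⟨i, hi⟩ := hcon x hx
    have hi' : 0 < dotProduct (star x) (A i *ᵥ x) :=
      lt_of_le_of_ne ((Matrix.posSemidef_iff_dotProduct_mulVec.mp (hA i)).2 x) (Ne.symm hi)
    refine Finset.sum_pos' (fun j _ => mul_nonneg (hlam j).le ((Matrix.posSemidef_iff_dotProduct_mulVec.mp (hA j)).2 x)) ?_
    exact ⟨i, Finset.mem_univ i, mul_pos (hlam i) hi'⟩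
  rintro B ⟨c, hc, rfl⟩
  refine ⟨hPSD c hc, fun hPD => ?_⟩
  have := (Matrix.posDef_iff_dotProduct_mulVec.mp hPD).2 hx0
  rw [quad_sum] at this
  simp only [hxq, mul_zero, Finset.sum_const_zero] at this
  exact lt_irrefl 0 this
end
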